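/- For every n ≥ 1, the polynomial p_n satisfies n!·p_n(t) = B_n(t) − B_n, where B_n(t) is the nth Bernoulli polynomial and B_n = B_n(0) is the nth Bernoulli number. -/

import Mathlib

open Polynomial Finset

lemma s_monomial (s : ℚ[X] →ₗ[ℚ] ℚ[X])
    (hs : ∀ k : ℕ, s (X ^ k) = C (((k : ℚ) + 1)⁻¹) * (X ^ (k + 1) - X))
    (k : ℕ) (c : ℚ) :
    s (monomial k c) = C (c * ((k : ℚ) + 1)⁻¹) * (X ^ (k + 1) - X) := by
  have : (monomial k c : ℚ[X]) = c • (X ^ k) := by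
    rw [smul_eq_C_mul, C_mul_X_pow_eq_monomial]
  rw [this, map_smul, hs k, smul_eq_C_mul, ← mul_assoc, ← C_mul]

lemma s_bernoulli (s : ℚ[X] →ₗ[ℚ] ℚ[X])
    (hs : ∀ k : ℕ, s (X ^ k) = C (((k : ℚ) + 1)⁻¹) * (X ^ (k + 1) - X))
    (n : ℕ) (hn : 1 ≤ n) :
    s (Polynomial.bernoulli n) =
      C (((n : ℚ) + 1)⁻¹) * (Polynomial.bernoulli (n + 1) - C (_root_.bernoulli (n + 1))) := by
  rw [Polynomial.bernoulli, map_sum]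
  have key : ∀ i ∈ range (n + 1),
      s (monomial (n - i) (_root_.bernoulli i * n.choose i)) =
        C (((n : ℚ) + 1)⁻¹) *
          (monomial (n + 1 - i) (_root_.bernoulli i * (n + 1).choose i)
            - C (_root_.bernoulli i * (n + 1).choose i) * X) := by
    intro i hi
    rw [mem_range] at hi
    have hi' : i ≤ n := Nat.lt_succ_iff.mp hi
    rw [s_monomial s hs]
    have h1 : n - i + 1 = n + 1 - i := by omega
    have h2 : (_root_.bernoulli i * n.choose i) * (((n - i : ℕ) : ℚ) + 1)⁻¹ =
        ((n : ℚ) + 1)⁻¹ * (_root_.bernoulli i * (n + 1).choose i) := by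
      have hc : ((n + 1).choose i : ℚ) * ((n : ℚ) + 1 - i) = (n.choose i : ℚ) * ((n : ℚ) + 1) := by
        have := Nat.add_one_mul_choose_eq n i  -- maybe wrong; compute directly
        have h3 : (n + 1).choose i * (n + 1 - i) = n.choose i * (n + 1) := by
          have := Nat.choose_mul_succ_eq (n) i
          -- fallback: direct
          rcases Nat.le_iff_lt_or_eq.mp hi' with h | h
          · have e1 : (n + 1).choose i * (n + 1 - i) * (i.factorial * (n - i).factorial)
                = n.choose i * (n + 1) * (i.factorial * (n - i).factorial) := by
              have f1 : (n+1).choose i * i.factorial * (n + 1 - i).factorial = (n+1).factorial :=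
                Nat.choose_mul_factorial_mul_factorial (by omega)
              have f2 : n.choose i * i.factorial * (n - i).factorial = n.factorial :=
                Nat.choose_mul_factorial_mul_factorial hi'
              have f3 : (n + 1 - i).factorial = (n + 1 - i) * (n - i).factorial := by
                have : n + 1 - i = (n - i) + 1 := by omega
                rw [this, Nat.factorial_succ]
              have f4 : (n+1).factorial = (n+1) * n.factorial := Nat.factorial_succ n
              calc (n + 1).choose i * (n + 1 - i) * (i.factorial * (n - i).factorial)
                  = (n+1).choose i * i.factorial * ((n + 1 - i) * (n - i).factorial) := by ring
                _ = (n+1).choose i * i.factorial * (n + 1 - i).factorial := by rw [f3]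
                _ = (n+1).factorial := f1
                _ = (n+1) * n.factorial := f4
                _ = (n+1) * (n.choose i * i.factorial * (n - i).factorial) := by rw [f2]
                _ = n.choose i * (n + 1) * (i.factorial * (n - i).factorial) := by ring
            exact Nat.eq_of_mul_eq_mul_right
              (Nat.mul_pos i.factorial_pos (n - i).factorial_pos) e1
          · subst h; simp [Nat.choose_self, Nat.choose_succ_self_right]
        have := congrArg (Nat.cast : ℕ → ℚ) h3
        push_cast [Nat.cast_sub (by omega : i ≤ n + 1)] at this
        convert this using 2 <;> push_cast <;> ring
      have hne : ((n : ℚ) + 1 - i) ≠ 0 := by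
        have : (i : ℚ) ≤ n := by exact_mod_cast hi'
        linarith
      have hne2 : ((n : ℚ) + 1) ≠ 0 := by positivity
      have hcast : (((n - i : ℕ) : ℚ) + 1) = (n : ℚ) + 1 - i := by
        push_cast [Nat.cast_sub hi']; ring
      rw [hcast]
      field_simp
      linear_combination -(_root_.bernoulli i) * hc
    rw [h1, h2, C_mul, mul_assoc]
    congr 1
    rw [mul_sub]
    congr 1
    rw [← C_mul_X_pow_eq_monomial]
  rw [Finset.sum_congr rfl key, ← Finset.mul_sum, Finset.sum_sub_distrib]
  congr 1
  have hzero : (∑ i ∈ range (n + 1), C (_root_.bernoulli i * ((n+1).choose i : ℚ)) * X) = 0 := by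
    rw [← Finset.sum_mul, ← map_sum]
    have : (∑ i ∈ range (n + 1), _root_.bernoulli i * ((n+1).choose i : ℚ)) = 0 := by
      have h := _root_.sum_bernoulli (n + 1)
      rw [if_neg (by omega)] at h
      rw [← h]
      exact Finset.sum_congr rfl fun i _ => mul_comm _ _
    rw [this, map_zero, zero_mul]
  rw [hzero, sub_zero]
  rw [Polynomial.bernoulli]
  conv_rhs => rw [Finset.sum_range_succ]
  have : (monomial (n + 1 - (n + 1)) (_root_.bernoulli (n+1) * ((n+1).choose (n+1)) : ℚ)) =
      C (_root_.bernoulli (n + 1)) := by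
    simp [monomial_zero_left]
  rw [this, add_sub_cancel_right]

theorem factorial_smul_dupont_p_eq_bernoulli (s : ℚ[X] →ₗ[ℚ] ℚ[X])
    (hs : ∀ k : ℕ, s (X ^ k) = C (((k : ℚ) + 1)⁻¹) * (X ^ (k + 1) - X))
    (p : ℕ → ℚ[X]) (hp1 : p 1 = X) (hp : ∀ n : ℕ, 2 ≤ n → p n = s (p (n - 1))) :
    ∀ n : ℕ, 1 ≤ n →
      C ((n.factorial : ℚ)) * p n = Polynomial.bernoulli n - C (_root_.bernoulli n) := by
  intro n hn
  induction n with
  | zero => omega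
  | succ m ih =>
    rcases Nat.eq_or_lt_of_le hn with h | h
    · have hm : m = 0 := by omega
      subst hm
      simp [hp1, Polynomial.bernoulli, Finset.sum_range_succ, _root_.bernoulli_one,
        monomial_zero_left, Polynomial.monomial_one_one_eq_X]
    · have hm : 1 ≤ m := by omega
      have ihm := ih hm
      have hrec := hp (m + 1) (by omega)
      simp only [Nat.add_sub_cancel] at hrec
      have hsc : s (C (_root_.bernoulli m)) = 0 := by
        have : (C (_root_.bernoulli m) : ℚ[X]) = _root_.bernoulli m • (X ^ 0) := by
          rw [smul_eq_C_mul, pow_zero, mul_one]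
        rw [this, map_smul, hs 0]
        simp
      have hlin : s (C ((m.factorial : ℚ)) * p m) = C ((m.factorial : ℚ)) * s (p m) := by
        rw [← smul_eq_C_mul, map_smul, smul_eq_C_mul]
      have key : C ((m.factorial : ℚ)) * s (p m) =
          C (((m : ℚ) + 1)⁻¹) * (Polynomial.bernoulli (m + 1) - C (_root_.bernoulli (m + 1))) := by
        rw [← hlin, ihm, map_sub, hsc, sub_zero, s_bernoulli s hs m hm]
      rw [hrec]
      have hfact : ((m + 1).factorial : ℚ) = ((m : ℚ) + 1) * (m.factorial : ℚ) := by
        rw [Nat.factorial_succ]; push_cast; ring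
      rw [hfact, C_mul, mul_assoc, key, ← mul_assoc, ← C_mul]
      rw [mul_inv_cancel₀ (by positivity : ((m : ℚ) + 1) ≠ 0)]
      simp
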